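/- Let {X_k, k ≥ 1} be i.i.d. real-valued random variables with distribution F and 0 < μ_+ = E[X^+] < ∞. For v > 0 and x > 0 set X̃_k = X_k·1{X_k ≤ vx} and S̃_n = X̃_1 + ⋯ + X̃_n. Then for all n ≥ 1 and x > 0, P(S̃_n > x) ≤ c_2 (n/x)^{1/v}, where c_2 = (μ_+ e)^{1/v}. -/

import Mathlib

open Filter MeasureTheory Set ProbabilityTheory

noncomputable section

/-- `f` is eventually positive. -/
def EvPos (f : ℝ → ℝ) : Prop := ∀ᶠ x in atTop, 0 < f x

/-- `f` is intermediate regularly varying. -/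
def IRvar (f : ℝ → ℝ) : Prop :=
  Tendsto (fun y => liminf (fun x => f (x * y) / f x) atTop) (nhdsWithin 1 (Ioi 1)) (nhds 1) ∧
  Tendsto (fun y => limsup (fun x => f (x * y) / f x) atTop) (nhdsWithin 1 (Ioi 1)) (nhds 1)

/-- `f` is O-regularly varying. -/
def ORvar (f : ℝ → ℝ) : Prop :=
  ∀ y : ℝ, 1 ≤ y →
    0 < liminf (fun x => f (x * y) / f x) atTop ∧
    IsBoundedUnder (· ≤ ·) atTop (fun x => f (x * y) / f x)

/-- `f` is long tailed. -/
def LongTailed (f : ℝ → ℝ) : Prop :=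
  ∀ y : ℝ, Tendsto (fun x => f (x + y) / f x) atTop (nhds 1)

/-- `f` is almost decreasing. -/
def AlmostDecreasing (f : ℝ → ℝ) : Prop :=
  IsBoundedUnder (· ≤ ·) atTop (fun x => sSup (f '' Ici x) / f x)

/-- the index `l_f` (as ε ↓ 0 the inner liminf increases, so the limit is the sup over ε > 0). -/
def lIdx (f : ℝ → ℝ) : ℝ :=
  ⨆ ε : Ioi (0:ℝ),
    liminf (fun x => sInf (f '' Icc ((1 - (ε:ℝ)) * x) ((1 + (ε:ℝ)) * x)) / f x) atTop

/-- the index `L_f` (as ε ↓ 0 the inner limsup decreases, so the limit is the inf over ε > 0). -/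
def LIdx (f : ℝ → ℝ) : ℝ :=
  ⨅ ε : Ioi (0:ℝ),
    limsup (fun x => sSup (f '' Icc ((1 - (ε:ℝ)) * x) ((1 + (ε:ℝ)) * x)) / f x) atTop

/-- `a` is the upper Matuszewska index `α(f)`. -/
def HasUpperMat (f : ℝ → ℝ) (a : ℝ) : Prop :=
  Tendsto (fun y => Real.log (limsup (fun x => f (x * y) / f x) atTop) / Real.log y)
    atTop (nhds a)

/-- `b` is the lower Matuszewska index `β(f)`. -/
def HasLowerMat (f : ℝ → ℝ) (b : ℝ) : Prop :=
  Tendsto (fun y => Real.log (liminf (fun x => f (x * y) / f x) atTop) / Real.log y)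
    atTop (nhds b)

/-- `Δ` is a set of the form `(0,T]` with `0 < T ≤ ∞`. -/
def IsDelta (Δ : Set ℝ) : Prop := (∃ T : ℝ, 0 < T ∧ Δ = Ioc 0 T) ∨ Δ = Ioi 0

-- auxiliary lemmas

private lemma aux_exp_convex {h c z : ℝ} (hh : 0 < h) (hc : 0 < c) (hz : z ≤ c) :
    Real.exp (h * z) ≤ 1 + max z 0 * ((Real.exp (h * c) - 1) / c) := by
  have hC : 0 ≤ (Real.exp (h * c) - 1) / c := by
    have h1 : (1:ℝ) ≤ Real.exp (h * c) := by
      rw [← Real.exp_zero]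
      exact Real.exp_le_exp.2 (by positivity)
    have : 0 ≤ Real.exp (h * c) - 1 := by linarith
    positivity
  rcases le_or_gt z 0 with h0 | h0
  · have h1 : Real.exp (h * z) ≤ 1 := by
      rw [← Real.exp_zero]
      refine Real.exp_le_exp.2 ?_
      nlinarith
    rw [max_eq_right h0]
    linarith
  · rw [max_eq_left h0.le]
    have hθ0 : 0 ≤ z / c := by positivity
    have hθ1 : 0 ≤ 1 - z / c := by
      have : z / c ≤ 1 := (div_le_one hc).2 hz
      linarith
    have hcvx := convexOn_exp.2 (Set.mem_univ (h * c)) (Set.mem_univ 0)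
      hθ0 hθ1 (by ring)
    simp only [smul_eq_mul, mul_zero, add_zero, Real.exp_zero, mul_one] at hcvx
    have harg : z / c * (h * c) = h * z := by field_simp
    rw [harg] at hcvx
    have : z / c * Real.exp (h * c) + (1 - z / c) = 1 + z * ((Real.exp (h * c) - 1) / c) := by
      field_simp; ring
    linarith

theorem truncated_sum_exponential_bound
    {Ω : Type*} [MeasurableSpace Ω] (P : Measure Ω) [IsProbabilityMeasure P]
    (X : ℕ → Ω → ℝ) (hmeas : ∀ k, Measurable (X k))
    (hindep : iIndepFun X P)
    (hident : ∀ k, IdentDistrib (X k) (X 0) P P)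
    (hint : Integrable (fun ω => max (X 0 ω) 0) P)
    (μp : ℝ) (hμp : μp = ∫ ω, max (X 0 ω) 0 ∂P) (hμppos : 0 < μp)
    (v : ℝ) (hv : 0 < v) :
    ∀ n : ℕ, 1 ≤ n → ∀ x : ℝ, 0 < x →
      (P {ω | x < ∑ k ∈ Finset.range n, (X k ω) * (Set.indicator {y : ℝ | y ≤ v * x} (fun _ => 1) (X k ω))}).toReal
        ≤ (μp * Real.exp 1) ^ (1 / v) * ((n : ℝ) / x) ^ (1 / v) := by
  intro n hn x hx
  have hnpos : (0:ℝ) < n := by exact_mod_cast hn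
  have hvx : 0 < v * x := mul_pos hv hx
  -- the truncation function
  set f : ℝ → ℝ := fun y => y * Set.indicator {y : ℝ | y ≤ v * x} (fun _ => 1) y with hfdef
  have hfmeas : Measurable f := by
    have hset : MeasurableSet {y : ℝ | y ≤ v * x} := measurableSet_Iic
    exact measurable_id.mul (Measurable.indicator measurable_const hset)
  have hfle : ∀ y : ℝ, f y ≤ v * x := by
    intro y
    by_cases hy : y ≤ v * x
    · simp only [hfdef, Set.indicator_of_mem (show y ∈ {y : ℝ | y ≤ v * x} from hy)]
      simpa using hy
    · simp only [hfdef, Set.indicator_of_notMem (show y ∉ {y : ℝ | y ≤ v * x} from hy)]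
      simpa using hvx.le
  have hfmax : ∀ y : ℝ, max (f y) 0 ≤ max y 0 := by
    intro y
    by_cases hy : y ≤ v * x
    · simp [hfdef, Set.indicator_of_mem (show y ∈ {y : ℝ | y ≤ v * x} from hy)]
    · simp [hfdef, Set.indicator_of_notMem (show y ∉ {y : ℝ | y ≤ v * x} from hy)]
  set Y : ℕ → Ω → ℝ := fun k ω => f (X k ω) with hYdef
  have hYmeas : ∀ k, Measurable (Y k) := fun k => hfmeas.comp (hmeas k)
  have hYindep : iIndepFun Y P :=
    hindep.comp (fun _ => f) (fun _ => hfmeas)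
  have hYid : ∀ k, IdentDistrib (Y k) (Y 0) P P := fun k => (hident k).comp hfmeas
  -- parameters
  set A : ℝ := x / (n * μp) + 1 with hAdef
  have hApos : 0 < A := by positivity
  have hA1 : 1 < A := by
    have : 0 < x / (n * μp) := by positivity
    simp only [hAdef]; linarith
  set h : ℝ := Real.log A / (v * x) with hhdef
  have hlogA : 0 < Real.log A := Real.log_pos hA1
  have hh : 0 < h := by positivity
  have hhvx : h * (v * x) = Real.log A := by rw [hhdef]; field_simp
  have hexph : Real.exp (h * (v * x)) = A := by rw [hhvx, Real.exp_log hApos]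
  set C : ℝ := (Real.exp (h * (v * x)) - 1) / (v * x) with hCdef
  have hCval : C = 1 / (n * v * μp) := by
    rw [hCdef, hexph, hAdef]
    field_simp
    ring
  have hCnonneg : 0 ≤ C := by rw [hCval]; positivity
  -- pointwise bound
  have hptwise : ∀ ω, Real.exp (h * Y 0 ω) ≤ 1 + max (X 0 ω) 0 * C := by
    intro ω
    refine (aux_exp_convex hh hvx (hfle (X 0 ω))).trans ?_
    have := hfmax (X 0 ω)
    have hXnn : 0 ≤ max (X 0 ω) 0 := le_max_right _ _
    rw [← hCdef]
    nlinarith [hfmax (X 0 ω)]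
  -- integrability of exp (h * Y k)
  have hIexp : ∀ k, Integrable (fun ω => Real.exp (h * Y k ω)) P := by
    intro k
    refine Integrable.mono' (integrable_const (Real.exp (h * (v * x))))
      (((hYmeas k).const_mul h).exp.aestronglyMeasurable) ?_
    filter_upwards with ω
    rw [Real.norm_eq_abs, abs_of_pos (Real.exp_pos _)]
    exact Real.exp_le_exp.2 (mul_le_mul_of_nonneg_left (hfle (X k ω)) hh.le)
  -- mgf bound
  have hmgf0 : mgf (Y 0) P h ≤ 1 + 1 / (n * v) := by
    have hrhsint : Integrable (fun ω => 1 + max (X 0 ω) 0 * C) P :=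
      (integrable_const 1).add (hint.mul_const C)
    have h1 : mgf (Y 0) P h ≤ ∫ ω, (1 + max (X 0 ω) 0 * C) ∂P :=
      integral_mono (hIexp 0) hrhsint hptwise
    have h2 : ∫ ω, (1 + max (X 0 ω) 0 * C) ∂P = 1 + μp * C := by
      rw [integral_add (integrable_const 1) (hint.mul_const C), integral_const,
        integral_mul_const, ← hμp]
      simp
    have h3 : μp * C = 1 / (n * v) := by
      rw [hCval]; field_simp
    rw [h2, h3] at h1
    exact h1
  have hmgf0nn : 0 ≤ mgf (Y 0) P h := mgf_nonneg
  -- Chernoff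
  set S : Ω → ℝ := fun ω => ∑ k ∈ Finset.range n, Y k ω with hSdef
  have hSsum : S = ∑ k ∈ Finset.range n, Y k := by
    ext ω; simp [hSdef, Finset.sum_apply]
  have hISexp : Integrable (fun ω => Real.exp (h * S ω)) P := by
    refine Integrable.mono' (integrable_const (Real.exp (h * (n * (v * x)))))
      ?_ ?_
    · exact ((Finset.measurable_sum _ (fun k _ => hYmeas k)).const_mul h).exp.aestronglyMeasurable
    · filter_upwards with ω
      rw [Real.norm_eq_abs, abs_of_pos (Real.exp_pos _)]
      refine Real.exp_le_exp.2 (mul_le_mul_of_nonneg_left ?_ hh.le)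
      calc S ω ≤ ∑ k ∈ Finset.range n, (v * x) :=
            Finset.sum_le_sum (fun k _ => hfle (X k ω))
        _ = n * (v * x) := by simp [Finset.sum_const, Finset.card_range]
  have hchern : (P {ω | x ≤ S ω}).toReal ≤ Real.exp (-h * x) * mgf S P h :=
    measure_ge_le_exp_mul_mgf x hh.le hISexp
  have hmgfS : mgf S P h = (mgf (Y 0) P h) ^ n := by
    rw [hSsum, hYindep.mgf_sum hYmeas (Finset.range n)]
    have : ∀ k ∈ Finset.range n, mgf (Y k) P h = mgf (Y 0) P h := by
      intro k _
      exact ((hYid k).comp (measurable_const_mul h).exp).integral_eq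
    rw [Finset.prod_congr rfl this, Finset.prod_const, Finset.card_range]
  -- bound (mgf)^n ≤ exp (1/v)
  have hpow : (mgf (Y 0) P h) ^ n ≤ Real.exp (1 / v) := by
    have h1 : (mgf (Y 0) P h) ^ n ≤ (1 + 1 / (n * v)) ^ n :=
      pow_le_pow_left₀ hmgf0nn hmgf0 n
    have h2 : (1 + 1 / ((n:ℝ) * v)) ^ n ≤ (Real.exp (1 / (n * v))) ^ n := by
      refine pow_le_pow_left₀ (by positivity) ?_ n
      have := Real.add_one_le_exp (1 / ((n:ℝ) * v))
      linarith
    have h3 : (Real.exp (1 / ((n:ℝ) * v))) ^ n = Real.exp (1 / v) := by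
      rw [← Real.exp_nat_mul]
      congr 1
      field_simp
    calc (mgf (Y 0) P h) ^ n ≤ (1 + 1 / ((n:ℝ) * v)) ^ n := h1
      _ ≤ (Real.exp (1 / ((n:ℝ) * v))) ^ n := h2
      _ = Real.exp (1 / v) := h3
  -- bound exp (-h*x)
  have hexpneg : Real.exp (-h * x) ≤ (x / (n * μp)) ^ (-(1 / v)) := by
    have h1 : -h * x = Real.log A * (-(1 / v)) := by
      rw [hhdef]; field_simp
    have h2 : Real.exp (-h * x) = A ^ (-(1 / v)) := by
      rw [h1, ← Real.rpow_def_of_pos hApos]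
    rw [h2]
    refine Real.rpow_le_rpow_of_nonpos (by positivity) ?_ (neg_nonpos.mpr (by positivity))
    simp only [hAdef]; linarith
  -- put everything together
  have hsub : (P {ω | x < S ω}).toReal ≤ (P {ω | x ≤ S ω}).toReal :=
    ENNReal.toReal_mono (measure_ne_top P _)
      (measure_mono (Set.setOf_subset_setOf.mpr fun ω hω => le_of_lt hω))
  have hmain : (P {ω | x < S ω}).toReal
      ≤ (x / (n * μp)) ^ (-(1 / v)) * Real.exp (1 / v) := by
    refine hsub.trans (hchern.trans ?_)
    rw [hmgfS]
    exact mul_le_mul hexpneg hpow (pow_nonneg hmgf0nn n) (by positivity)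
  have hfinal : (x / (n * μp)) ^ (-(1 / v)) * Real.exp (1 / v)
      = (μp * Real.exp 1) ^ (1 / v) * ((n : ℝ) / x) ^ (1 / v) := by
    rw [Real.rpow_neg (by positivity), ← Real.inv_rpow (by positivity), inv_div,
      ← Real.exp_one_rpow (1 / v), ← Real.mul_rpow (by positivity) (Real.exp_pos 1).le,
      ← Real.mul_rpow (by positivity) (by positivity)]
    congr 1
    field_simp
  rw [hfinal] at hmain
  exact hmain
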